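/- If the system of strict inequalities Σ_{m=1}^n α_m r_m(x) > 0 for all x ∈ A has no solution α ∈ ℝ^n, where A is a compact set and r : A → ℝ^n is continuous, then the origin of ℝ^n lies in the convex hull of the set {r(x) : x ∈ A}. -/

import Mathlib

open Set Function

private lemma isCompact_convexHull_aux {n : ℕ} {s : Set (Fin n → ℝ)} (hs : IsCompact s) :
    IsCompact (convexHull ℝ s) := by
  classical
  rcases s.eq_empty_or_nonempty with rfl | ⟨p₀, hp₀⟩
  · simp only [convexHull_empty]; exact isCompact_empty
  set F : ((Fin (n + 1) → ℝ) × (Fin (n + 1) → (Fin n → ℝ))) → (Fin n → ℝ) :=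
    fun q => ∑ i, q.1 i • q.2 i with hF
  have hFcont : Continuous F := by
    apply continuous_finset_sum
    intro i _
    exact ((continuous_apply i).comp continuous_fst).smul
      ((continuous_apply i).comp continuous_snd)
  have hK : IsCompact ((stdSimplex ℝ (Fin (n + 1))) ×ˢ (Set.pi Set.univ fun _ : Fin (n + 1) => s)) :=
    (isCompact_stdSimplex ℝ _).prod (isCompact_univ_pi fun _ => hs)
  have himg : F '' ((stdSimplex ℝ (Fin (n + 1))) ×ˢ (Set.pi Set.univ fun _ : Fin (n + 1) => s))
      = convexHull ℝ s := by
    apply Set.Subset.antisymm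
    · rintro _ ⟨⟨w, z⟩, ⟨⟨hw0, hw1⟩, hz⟩, rfl⟩
      have := Finset.centerMass_mem_convexHull (Finset.univ : Finset (Fin (n + 1)))
        (w := w) (z := z) (fun i _ => hw0 i) (by rw [hw1]; norm_num)
        (fun i _ => hz i trivial)
      rwa [Finset.centerMass_eq_of_sum_1 _ _ hw1] at this
    · intro x hx
      obtain ⟨ι, hι, z, w, hzs, hindep, hwpos, hw1, hsum⟩ :=
        eq_pos_convex_span_of_mem_convexHull hx
      have hcard : Fintype.card ι ≤ n + 1 := by
        have h1 := hindep.card_le_finrank_succ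
        have h2 : Module.finrank ℝ (vectorSpan ℝ (Set.range z)) ≤ n := by
          have := Submodule.finrank_le (vectorSpan ℝ (Set.range z))
          simpa using this
        omega
      obtain ⟨e⟩ : Nonempty (ι ↪ Fin (n + 1)) :=
        Function.Embedding.nonempty_of_card_le (by simpa using hcard)
      set w' : Fin (n + 1) → ℝ := Function.extend e w 0 with hw'
      set z' : Fin (n + 1) → (Fin n → ℝ) := Function.extend e z (fun _ => p₀) with hz'
      have hsum_ext : ∀ (g : ι → ℝ), ∑ j, Function.extend e g 0 j = ∑ i, g i := by
        intro g
        rw [show (∑ i, g i) = ∑ j ∈ Finset.univ.image e, Function.extend e g 0 j by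
          rw [Finset.sum_image (fun a _ b _ h => e.injective h)]
          exact Finset.sum_congr rfl fun i _ => (e.injective.extend_apply g 0 i).symm]
        refine (Finset.sum_subset (Finset.subset_univ _) fun j _ hj => ?_).symm
        apply Function.extend_apply'
        rintro ⟨i, rfl⟩
        exact hj (Finset.mem_image_of_mem e (Finset.mem_univ i))
      refine ⟨⟨w', z'⟩, ⟨⟨?_, ?_⟩, ?_⟩, ?_⟩
      · intro j
        show 0 ≤ Function.extend (⇑e) w 0 j
        rcases em (∃ i, e i = j) with ⟨i, rfl⟩ | hj
        · rw [e.injective.extend_apply]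
          exact (hwpos i).le
        · rw [Function.extend_apply' _ _ _ hj]
          rfl
      · rw [hw', hsum_ext w, hw1]
      · intro j _
        show Function.extend (⇑e) z (fun _ => p₀) j ∈ s
        rcases em (∃ i, e i = j) with ⟨i, rfl⟩ | hj
        · rw [e.injective.extend_apply]
          exact hzs ⟨i, rfl⟩
        · rw [Function.extend_apply' _ _ _ hj]
          exact hp₀
      · have key : ∀ j, w' j • z' j = Function.extend e (fun i => w i • z i) 0 j := by
          intro j
          rcases em (∃ i, e i = j) with ⟨i, rfl⟩ | hj
          · rw [hw', hz', e.injective.extend_apply, e.injective.extend_apply,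
              e.injective.extend_apply]
          · rw [hw', Function.extend_apply' _ _ _ hj, Function.extend_apply' _ _ _ hj]
            simp
        calc F (w', z') = ∑ j, w' j • z' j := rfl
          _ = ∑ j, Function.extend e (fun i => w i • z i) 0 j :=
              Finset.sum_congr rfl fun j _ => key j
          _ = ∑ i, w i • z i := by
              have := hsum_ext  -- for ℝ only; redo for vectors below
              -- prove directly
              rw [show (∑ i, w i • z i) = ∑ j ∈ Finset.univ.image e,
                    Function.extend e (fun i => w i • z i) 0 j by
                rw [Finset.sum_image (fun a _ b _ h => e.injective h)]
                exact Finset.sum_congr rfl fun i _ =>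
                  (e.injective.extend_apply (fun i => w i • z i) 0 i).symm]
              refine (Finset.sum_subset (Finset.subset_univ _) fun j _ hj => ?_).symm
              apply Function.extend_apply'
              rintro ⟨i, rfl⟩
              exact hj (Finset.mem_image_of_mem e (Finset.mem_univ i))
          _ = x := hsum
  rw [← himg]
  exact hK.image hFcont

/-- if the system `⟨α, r(x)⟩ > 0` for all `x ∈ A` is unsolvable,
then `0` lies in the convex hull of `{r(x) : x ∈ A}`. -/
theorem stmt_3 {A : Type*} [TopologicalSpace A] [CompactSpace A] [Nonempty A]
    {n : ℕ} (r : A → (Fin n → ℝ)) (hr : Continuous r)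
    (h : ¬ ∃ α : Fin n → ℝ, ∀ x : A, 0 < ∑ m, α m * r x m) :
    (0 : Fin n → ℝ) ∈ convexHull ℝ (Set.range r) := by
  by_contra h0
  apply h
  have hcomp : IsCompact (Set.range r) := isCompact_range hr
  have hch : IsCompact (convexHull ℝ (Set.range r)) := isCompact_convexHull_aux hcomp
  obtain ⟨f, c, hfc, hc⟩ := geometric_hahn_banach_point_closed
    (convex_convexHull ℝ (Set.range r)) hch.isClosed h0
  refine ⟨fun m => f (Pi.single m 1), fun x => ?_⟩
  have hx : c < f (r x) := hc _ (subset_convexHull ℝ _ ⟨x, rfl⟩)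
  have h0c : (0 : ℝ) < c := by simpa using hfc
  have : f (r x) = ∑ m, (fun m => f (Pi.single m 1)) m * r x m := by
    conv_lhs => rw [pi_eq_sum_univ (r x)]
    rw [map_sum]
    refine Finset.sum_congr rfl fun m _ => ?_
    rw [map_smul]
    have : (fun j => if m = j then (1:ℝ) else 0) = Pi.single m 1 := by
      ext j; simp [Pi.single_apply, eq_comm]
    simp [this, mul_comm]
  rw [← this]
  linarith
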